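/- Let g(z)=Σ_{k∈ℤ} d_k z^k ∈ A_1 and let ν be a Beurling weight increasing on ℤ₊ with R = lim ν(n)^{1/n}. Let r be a rational function with no poles in the annulus 1/R ≤ |z| ≤ 1, and write r(z)g(z)=Σ_{k∈ℤ} d̂_k z^k. If Σ_{k<0} d_k z^k ∈ A_ν^-, then Σ_{k<0} d̂_k z^k ∈ A_ν^-. -/

import Mathlib

open Filter

set_option maxHeartbeats 1000000

section Aux

open Complex Real MeasureTheory intervalIntegral

noncomputable def myconv (c e : ℤ → ℂ) : ℤ → ℂ := fun k => ∑' j, c j * e (k - j)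

def shearEquiv : ℤ × ℤ ≃ ℤ × ℤ where
  toFun p := (p.1 + p.2, p.1)
  invFun q := (q.2, q.1 - q.2)
  left_inv p := by simp
  right_inv q := by simp

variable {W : ℤ → ℝ} {c e : ℤ → ℂ}

lemma summable_H (hW0 : ∀ j, 0 ≤ W j)
    (hc : Summable fun j => W j * ‖c j‖) (he : Summable fun j => W j * ‖e j‖) :
    Summable fun q : ℤ × ℤ => (W q.2 * ‖c q.2‖) * ((W (q.1 - q.2)) * ‖e (q.1 - q.2)‖) := by
  have h := hc.mul_of_nonneg he (fun j => mul_nonneg (hW0 j) (norm_nonneg _))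
    (fun j => mul_nonneg (hW0 j) (norm_nonneg _))
  exact (shearEquiv.symm.summable_iff
    (f := fun p : ℤ × ℤ => (W p.1 * ‖c p.1‖) * (W p.2 * ‖e p.2‖))).2 h

lemma fiber_summable (hW1 : ∀ j, 1 ≤ W j)
    (hc : Summable fun j => W j * ‖c j‖) (he : Summable fun j => W j * ‖e j‖) (k : ℤ) :
    Summable fun j : ℤ => ‖c j‖ * ‖e (k - j)‖ := by
  have h := summable_H (fun j => le_trans zero_le_one (hW1 j)) hc he
  have h2 := h.comp_injective (i := fun j : ℤ => ((k, j) : ℤ × ℤ))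
    (fun a b hab => by simpa using hab)
  refine h2.of_nonneg_of_le (fun j => by positivity) (fun j => ?_)
  have h1 : ‖c j‖ ≤ W j * ‖c j‖ := le_mul_of_one_le_left (norm_nonneg _) (hW1 j)
  have h2 : ‖e (k - j)‖ ≤ W (k - j) * ‖e (k - j)‖ :=
    le_mul_of_one_le_left (norm_nonneg _) (hW1 _)
  exact mul_le_mul h1 h2 (norm_nonneg _)
    (mul_nonneg (le_trans zero_le_one (hW1 j)) (norm_nonneg _))

lemma conv_summable (hW1 : ∀ j, 1 ≤ W j) (hWsub : ∀ i j, W (i + j) ≤ W i * W j)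
    (hc : Summable fun j => W j * ‖c j‖) (he : Summable fun j => W j * ‖e j‖) :
    Summable fun k => W k * ‖myconv c e k‖ := by
  have hW0 : ∀ j, 0 ≤ W j := fun j => le_trans zero_le_one (hW1 j)
  have hH := summable_H hW0 hc he
  have hfibW : ∀ k : ℤ, Summable fun j : ℤ =>
      (W j * ‖c j‖) * (W (k - j) * ‖e (k - j)‖) := fun k =>
    hH.comp_injective (i := fun j : ℤ => ((k, j) : ℤ × ℤ)) (fun a b hab => by simpa using hab)
  have hmaj : Summable fun k : ℤ => ∑' j, (W j * ‖c j‖) * (W (k - j) * ‖e (k - j)‖) :=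
    ((summable_prod_of_nonneg (fun q => mul_nonneg (mul_nonneg (hW0 _) (norm_nonneg _))
      (mul_nonneg (hW0 _) (norm_nonneg _)))).1 hH).2
  refine hmaj.of_nonneg_of_le (fun k => mul_nonneg (hW0 k) (norm_nonneg _)) (fun k => ?_)
  have hfib := fiber_summable hW1 hc he k
  have h1 : ‖myconv c e k‖ ≤ ∑' j, ‖c j‖ * ‖e (k - j)‖ := by
    refine le_trans (norm_tsum_le_tsum_norm (by simpa [norm_mul] using hfib)) ?_
    simp [norm_mul]
  calc W k * ‖myconv c e k‖ ≤ W k * ∑' j, ‖c j‖ * ‖e (k - j)‖ :=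
        mul_le_mul_of_nonneg_left h1 (hW0 k)
    _ = ∑' j, W k * (‖c j‖ * ‖e (k - j)‖) := (tsum_mul_left).symm
    _ ≤ ∑' j, (W j * ‖c j‖) * (W (k - j) * ‖e (k - j)‖) := by
        refine Summable.tsum_le_tsum (fun j => ?_) (hfib.mul_left _) (hfibW k)
        have hk : W k ≤ W j * W (k - j) := by
          have := hWsub j (k - j); simpa using this
        calc W k * (‖c j‖ * ‖e (k - j)‖) ≤ (W j * W (k - j)) * (‖c j‖ * ‖e (k - j)‖) :=
              mul_le_mul_of_nonneg_right hk (by positivity)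
          _ = (W j * ‖c j‖) * (W (k - j) * ‖e (k - j)‖) := by ring

lemma conv_hasSum (hW1 : ∀ j, 1 ≤ W j)
    (hc : Summable fun j => W j * ‖c j‖) (he : Summable fun j => W j * ‖e j‖)
    {z : ℂ} (hz : ‖z‖ = 1) {F G : ℂ}
    (hF : HasSum (fun j => c j * z ^ j) F) (hG : HasSum (fun j => e j * z ^ j) G) :
    HasSum (fun k => myconv c e k * z ^ k) (F * G) := by
  have hz0 : z ≠ 0 := fun h => by simp [h] at hz
  have hnorm : ∀ j : ℤ, ‖z ^ j‖ = 1 := fun j => by rw [norm_zpow, hz, one_zpow]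
  have hs : Summable fun p : ℤ × ℤ => ‖(c p.1 * z ^ p.1) * (e p.2 * z ^ p.2)‖ := by
    have hprod := (hc.of_nonneg_of_le (fun j => norm_nonneg _)
        (fun j => le_mul_of_one_le_left (norm_nonneg _) (hW1 j))).mul_of_nonneg
      (he.of_nonneg_of_le (fun j => norm_nonneg _)
        (fun j => le_mul_of_one_le_left (norm_nonneg _) (hW1 j)))
      (fun j => norm_nonneg _) (fun j => norm_nonneg _)
    refine hprod.of_nonneg_of_le (fun p => norm_nonneg _) (fun p => le_of_eq ?_)
    simp [norm_mul, hnorm]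
  have key : ∀ C E : ℤ → ℂ, Summable (fun p : ℤ × ℤ => ‖C p.1 * E p.2‖) →
      HasSum C F → HasSum E G → HasSum (fun p : ℤ × ℤ => C p.1 * E p.2) (F * G) :=
    fun C E hs hF hG => hF.mul hG (Summable.of_norm hs)
  have hmul : HasSum (fun p : ℤ × ℤ => (c p.1 * z ^ p.1) * (e p.2 * z ^ p.2)) (F * G) :=
    key (fun j => c j * z ^ j) (fun j => e j * z ^ j) hs hF hG
  have hre : HasSum (fun q : ℤ × ℤ => (c q.2 * e (q.1 - q.2)) * z ^ q.1) (F * G) := by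
    have h2 := (shearEquiv.symm.hasSum_iff
      (f := fun p : ℤ × ℤ => (c p.1 * z ^ p.1) * (e p.2 * z ^ p.2))).2 hmul
    refine HasSum.congr_fun h2 (fun q => ?_)
    have h3 : (c q.2 * z ^ q.2) * (e (q.1 - q.2) * z ^ (q.1 - q.2))
        = c q.2 * e (q.1 - q.2) * z ^ q.1 := by
      rw [mul_mul_mul_comm, ← zpow_add₀ hz0]
      congr 2
      omega
    exact h3.symm
  refine hre.prod_fiberwise (fun k => ?_)
  have hsum_k : Summable fun j : ℤ => c j * e (k - j) :=
    Summable.of_norm (by simpa [norm_mul] using fiber_summable hW1 hc he k)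
  exact hsum_k.hasSum.mul_right (z ^ k)

/-- Sequences representing a function on the unit circle with `W`-weighted
summable coefficients. -/
def GoodRep (W : ℤ → ℝ) (F : ℂ → ℂ) : Prop :=
  ∃ c : ℤ → ℂ, (Summable fun j => W j * ‖c j‖) ∧
    ∀ z : ℂ, ‖z‖ = 1 → HasSum (fun j => c j * z ^ j) (F z)

variable {F G : ℂ → ℂ}

lemma GoodRep.mul (hW1 : ∀ j, 1 ≤ W j) (hWsub : ∀ i j, W (i + j) ≤ W i * W j)
    (hF : GoodRep W F) (hG : GoodRep W G) : GoodRep W (fun z => F z * G z) := by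
  obtain ⟨c, hc, hcs⟩ := hF
  obtain ⟨e, he, hes⟩ := hG
  exact ⟨myconv c e, conv_summable hW1 hWsub hc he,
    fun z hz => conv_hasSum hW1 hc he hz (hcs z hz) (hes z hz)⟩

lemma GoodRep.congr (hF : GoodRep W F) (h : ∀ z : ℂ, ‖z‖ = 1 → F z = G z) :
    GoodRep W G := by
  obtain ⟨c, hc, hcs⟩ := hF
  exact ⟨c, hc, fun z hz => (h z hz) ▸ hcs z hz⟩

lemma GoodRep.add (hW1 : ∀ j, 1 ≤ W j) (hF : GoodRep W F) (hG : GoodRep W G) :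
    GoodRep W (fun z => F z + G z) := by
  obtain ⟨c, hc, hcs⟩ := hF
  obtain ⟨e, he, hes⟩ := hG
  refine ⟨fun j => c j + e j, ?_, fun z hz => ?_⟩
  · refine (hc.add he).of_nonneg_of_le
      (fun j => mul_nonneg (le_trans zero_le_one (hW1 j)) (norm_nonneg _)) (fun j => ?_)
    have h1 : ‖c j + e j‖ ≤ ‖c j‖ + ‖e j‖ := norm_add_le _ _
    calc W j * ‖c j + e j‖ ≤ W j * (‖c j‖ + ‖e j‖) :=
          mul_le_mul_of_nonneg_left h1 (le_trans zero_le_one (hW1 j))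
      _ = W j * ‖c j‖ + W j * ‖e j‖ := by ring
  · have := (hcs z hz).add (hes z hz)
    refine this.congr_fun (fun j => by ring)

lemma goodRep_monomial (hW1 : ∀ j, 1 ≤ W j) (n : ℕ) (a : ℂ) :
    GoodRep W (fun z => a * z ^ n) := by
  refine ⟨fun j => if j = (n : ℤ) then a else 0, ?_, fun z hz => ?_⟩
  · apply summable_of_ne_finset_zero (s := {(n : ℤ)})
    intro j hj
    simp only [Finset.mem_singleton] at hj
    simp [hj]
  · have h1 : HasSum (fun j : ℤ => if j = (n : ℤ) then a * z ^ (n:ℤ) else 0) (a * z ^ (n:ℤ)) :=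
      hasSum_ite_eq _ _
    have h2 : HasSum (fun j : ℤ => (if j = (n:ℤ) then a else 0) * z ^ j) (a * z ^ (n:ℤ)) :=
      h1.congr_fun (fun j => by by_cases h : j = (n:ℤ) <;> simp [h])
    simpa [zpow_natCast] using h2

lemma goodRep_const (hW1 : ∀ j, 1 ≤ W j) (a : ℂ) : GoodRep W (fun _ => a) :=
  (goodRep_monomial hW1 0 a).congr (fun z _ => by simp)

lemma goodRep_poly (hW1 : ∀ j, 1 ≤ W j) (p : Polynomial ℂ) :
    GoodRep W (fun z => p.eval z) := by
  induction p using Polynomial.induction_on' with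
  | add p q hp hq =>
      exact (GoodRep.add hW1 hp hq).congr (fun z _ => (Polynomial.eval_add).symm)
  | monomial n a =>
      exact (goodRep_monomial hW1 n a).congr (fun z _ => (Polynomial.eval_monomial).symm)

lemma goodRep_inv_out (hW1 : ∀ j, 1 ≤ W j) (hWnat : ∀ n : ℕ, W (n : ℤ) = 1)
    {a : ℂ} (ha : 1 < ‖a‖) : GoodRep W (fun z => (z - a)⁻¹) := by
  have ha0 : a ≠ 0 := by
    intro h; rw [h] at ha; simp at ha; linarith
  have hainv : ‖a⁻¹‖ < 1 := by
    rw [norm_inv, inv_lt_one_iff₀]; right; exact ha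
  set c : ℤ → ℂ := fun j => if 0 ≤ j then -(a⁻¹ ^ (j.toNat + 1)) else 0 with hcdef
  refine ⟨c, ?_, fun z hz => ?_⟩
  · have h1 : Summable (fun n : ℕ => ‖a⁻¹‖ ^ (n + 1)) :=
      ((summable_geometric_of_lt_one (norm_nonneg _) hainv).mul_left ‖a⁻¹‖).congr
        (fun n => by rw [pow_succ, mul_comm])
    refine Summable.of_nat_of_neg_add_one (f := fun j => W j * ‖c j‖) ?_ ?_
    · refine h1.congr (fun n => ?_)
      have h0 : (0:ℤ) ≤ (n:ℤ) := Int.natCast_nonneg n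
      simp [hcdef, h0, hWnat n, norm_pow]
    · refine (summable_zero : Summable fun _ : ℕ => (0:ℝ)).congr (fun n => ?_)
      have h0 : ¬ (0:ℤ) ≤ -((n:ℤ) + 1) := by omega
      have hcz : c (-((n:ℤ) + 1)) = 0 := by simp only [hcdef]; exact if_neg h0
      show (0:ℝ) = W (-((n:ℤ) + 1)) * ‖c (-((n:ℤ) + 1))‖
      rw [hcz, norm_zero, mul_zero]
  · have hz0 : z ≠ 0 := fun h => by simp [h] at hz
    have hx : ‖z * a⁻¹‖ < 1 := by rw [norm_mul, hz, one_mul]; exact hainv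
    have hgeo : HasSum (fun n : ℕ => (z * a⁻¹) ^ n) (1 - z * a⁻¹)⁻¹ :=
      hasSum_geometric_of_norm_lt_one hx
    have hfac : z - a = -a * (1 - z * a⁻¹) := by field_simp; ring
    have hval : -a⁻¹ * (1 - z * a⁻¹)⁻¹ = (z - a)⁻¹ := by
      rw [hfac, mul_inv, ← neg_inv]
    have hmul : HasSum (fun n : ℕ => -a⁻¹ * (z * a⁻¹) ^ n) ((z - a)⁻¹) := by
      rw [← hval]; exact hgeo.mul_left _
    have part1 : HasSum (fun n : ℕ => c (n : ℤ) * z ^ ((n : ℤ))) ((z - a)⁻¹) := by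
      refine hmul.congr_fun (fun n => ?_)
      have h0 : (0:ℤ) ≤ (n:ℤ) := Int.natCast_nonneg n
      simp only [hcdef, h0, if_pos, Int.toNat_natCast]
      rw [zpow_natCast, mul_pow, pow_succ]
      ring
    have part2 : HasSum (fun n : ℕ => c (-((n : ℤ) + 1)) * z ^ (-((n : ℤ) + 1))) 0 := by
      refine (hasSum_zero : HasSum (fun _ : ℕ => (0:ℂ)) 0).congr_fun (fun n => ?_)
      have h0 : ¬ (0:ℤ) ≤ -((n:ℤ) + 1) := by omega
      have hcz : c (-((n:ℤ) + 1)) = 0 := by simp only [hcdef]; exact if_neg h0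
      show c (-((n:ℤ) + 1)) * z ^ (-((n:ℤ) + 1)) = (0:ℂ)
      rw [hcz, zero_mul]
    have := HasSum.of_nat_of_neg_add_one (f := fun j : ℤ => c j * z ^ j) part1 part2
    simpa using this

lemma goodRep_inv_in {a : ℂ} (ha1 : ‖a‖ < 1)
    (hsum : Summable fun n : ℕ => W (-(n : ℤ) - 1) * ‖a‖ ^ n) :
    GoodRep W (fun z => (z - a)⁻¹) := by
  set c : ℤ → ℂ := fun j => if j ≤ -1 then a ^ (-j - 1).toNat else 0 with hcdef
  refine ⟨c, ?_, fun z hz => ?_⟩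
  · refine Summable.of_nat_of_neg_add_one (f := fun j => W j * ‖c j‖) ?_ ?_
    · refine (summable_zero : Summable fun _ : ℕ => (0:ℝ)).congr (fun n => ?_)
      have h0 : ¬ ((n:ℤ) ≤ -1) := by omega
      have hcz : c ((n:ℕ) : ℤ) = 0 := by simp only [hcdef]; exact if_neg h0
      show (0:ℝ) = W ((n:ℕ) : ℤ) * ‖c ((n:ℕ) : ℤ)‖
      rw [hcz, norm_zero, mul_zero]
    · refine hsum.congr (fun n => ?_)
      have h1 : (-((n:ℤ) + 1) : ℤ) ≤ -1 := by omega
      have h2 : (-(-((n:ℤ) + 1)) - 1).toNat = n := by omega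
      have h3 : W (-(n:ℤ) - 1) = W (-((n:ℤ) + 1)) := by ring_nf
      rw [h3]
      simp [hcdef, h1, h2, norm_pow]
  · have hz0 : z ≠ 0 := fun h => by simp [h] at hz
    have hx : ‖a * z⁻¹‖ < 1 := by rw [norm_mul, norm_inv, hz]; simpa using ha1
    have hgeo : HasSum (fun n : ℕ => (a * z⁻¹) ^ n) (1 - a * z⁻¹)⁻¹ :=
      hasSum_geometric_of_norm_lt_one hx
    have hfac : z - a = z * (1 - a * z⁻¹) := by field_simp
    have hval : z⁻¹ * (1 - a * z⁻¹)⁻¹ = (z - a)⁻¹ := by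
      rw [hfac, mul_inv]
    have hmul : HasSum (fun n : ℕ => z⁻¹ * (a * z⁻¹) ^ n) ((z - a)⁻¹) := by
      rw [← hval]; exact hgeo.mul_left _
    have part1 : HasSum (fun n : ℕ => c (n : ℤ) * z ^ ((n : ℤ))) 0 := by
      refine (hasSum_zero : HasSum (fun _ : ℕ => (0:ℂ)) 0).congr_fun (fun n => ?_)
      have h0 : ¬ ((n:ℤ) ≤ -1) := by omega
      have hcz : c ((n:ℕ) : ℤ) = 0 := by simp only [hcdef]; exact if_neg h0
      show c ((n:ℕ) : ℤ) * z ^ ((n:ℕ) : ℤ) = (0:ℂ)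
      rw [hcz, zero_mul]
    have part2 : HasSum (fun n : ℕ => c (-((n : ℤ) + 1)) * z ^ (-((n : ℤ) + 1))) ((z - a)⁻¹) := by
      refine hmul.congr_fun (fun n => ?_)
      have h1 : (-((n:ℤ) + 1) : ℤ) ≤ -1 := by omega
      have h2 : (-(-((n:ℤ) + 1)) - 1).toNat = n := by omega
      simp only [hcdef, h1, if_pos, h2]
      have hzp : z ^ ((n:ℤ) + 1) = z ^ (n + 1) := by
        rw [← zpow_natCast z (n+1)]; norm_cast
      rw [zpow_neg, hzp, mul_pow, ← inv_pow, pow_succ]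
      ring
    have := HasSum.of_nat_of_neg_add_one (f := fun j : ℤ => c j * z ^ j) part1 part2
    simpa using this

lemma goodRep_inv_multiset (hW1 : ∀ j, 1 ≤ W j) (hWsub : ∀ i j, W (i + j) ≤ W i * W j)
    (s : Multiset ℂ) (hgood : ∀ a ∈ s, GoodRep W (fun z => (z - a)⁻¹)) :
    GoodRep W (fun z => ((s.map fun a => z - a).prod)⁻¹) := by
  induction s using Multiset.induction_on with
  | empty =>
      refine (goodRep_const hW1 1).congr (fun z _ => ?_)
      simp
  | cons a s ih =>
      have h1 : GoodRep W (fun z => (z - a)⁻¹) := hgood a (Multiset.mem_cons_self a s)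
      have h2 := ih (fun b hb => hgood b (Multiset.mem_cons_of_mem hb))
      refine (GoodRep.mul hW1 hWsub h1 h2).congr (fun z _ => ?_)
      rw [Multiset.map_cons, Multiset.prod_cons, mul_inv]

lemma exp_circle_integral (n : ℤ) :
    (∫ θ in (0:ℝ)..(2 * π), Complex.exp ((n : ℂ) * θ * I)) =
      if n = 0 then ((2 * π : ℝ) : ℂ) else 0 := by
  by_cases h : n = 0
  · simp [h]
  · rw [if_neg h]
    have hc : (n : ℂ) * I ≠ 0 := by
      simp [Complex.ext_iff, h]
    have heq : (fun θ : ℝ => Complex.exp ((n : ℂ) * θ * I))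
        = fun θ : ℝ => Complex.exp (((n : ℂ) * I) * θ) := by
      funext θ; ring_nf
    rw [heq, integral_exp_mul_complex hc]
    have h1 : (n : ℂ) * I * (2 * π : ℝ) = (n : ℤ) * (2 * π * I) := by
      push_cast; ring
    rw [h1, Complex.exp_int_mul_two_pi_mul_I]
    simp

lemma coeff_unique {u : ℤ → ℂ} (hu : Summable fun j => ‖u j‖)
    (h0 : ∀ z : ℂ, ‖z‖ = 1 → HasSum (fun j => u j * z ^ j) 0) : ∀ k, u k = 0 := by
  intro k
  set F : ℤ → ℝ → ℂ := fun j θ => u j * Complex.exp ((((j : ℂ) - k)) * θ * I) with hFdef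
  have hnormF : ∀ j θ, ‖F j θ‖ = ‖u j‖ := by
    intro j θ
    have : ((j : ℂ) - k) * θ * I = ((((j - k : ℤ) : ℝ) * θ : ℝ) : ℂ) * I := by push_cast; ring
    rw [hFdef]
    simp only [norm_mul, this, Complex.norm_exp_ofReal_mul_I, mul_one]
  have hsum0 : ∀ θ : ℝ, HasSum (fun j => F j θ) 0 := by
    intro θ
    have hz : ‖Complex.exp (θ * I)‖ = 1 := Complex.norm_exp_ofReal_mul_I θ
    have h1 := (h0 _ hz).mul_right (Complex.exp ((-(k : ℂ)) * θ * I))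
    rw [zero_mul] at h1
    refine h1.congr_fun (fun j => ?_)
    rw [hFdef]
    simp only
    rw [← Complex.exp_int_mul (θ * I) j, mul_assoc (u j), ← Complex.exp_add]
    congr 1
    ring
  have hmeas : ∀ j, AEStronglyMeasurable (F j) (volume.restrict (Set.Ioc 0 (2 * π))) := by
    intro j
    refine Continuous.aestronglyMeasurable ?_
    exact continuous_const.mul (Complex.continuous_exp.comp (by continuity))
  have hlin : ∑' j, ∫⁻ θ in Set.Ioc 0 (2 * π), ‖F j θ‖₊ ∂volume ≠ ⊤ := by
    have hvol : (volume (Set.Ioc (0:ℝ) (2 * π))) = ENNReal.ofReal (2 * π) := by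
      simp [Real.volume_Ioc]
    have heach : ∀ j, ∫⁻ θ in Set.Ioc 0 (2 * π), ‖F j θ‖₊ ∂volume
        = (‖u j‖₊ : ENNReal) * ENNReal.ofReal (2 * π) := by
      intro j
      have : (fun θ => (‖F j θ‖₊ : ENNReal)) = fun _ => (‖u j‖₊ : ENNReal) := by
        funext θ
        congr 1
        ext
        exact hnormF j θ
      rw [this, MeasureTheory.lintegral_const, Measure.restrict_apply_univ, hvol]
    rw [funext heach] at *
    rw [ENNReal.tsum_mul_right]
    refine ENNReal.mul_ne_top ?_ ENNReal.ofReal_ne_top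
    rw [ENNReal.tsum_coe_ne_top_iff_summable]
    exact NNReal.summable_coe.1 (by simpa [coe_nnnorm] using hu)
  have hint : (∫ θ in Set.Ioc (0:ℝ) (2*π), (∑' j, F j θ) ∂volume)
      = ∑' j, ∫ θ in Set.Ioc (0:ℝ) (2*π), F j θ ∂volume :=
    MeasureTheory.integral_tsum hmeas hlin
  have hleft : (∫ θ in Set.Ioc (0:ℝ) (2*π), (∑' j, F j θ) ∂volume) = 0 := by
    have h4 : ∀ θ : ℝ, (∑' j, F j θ) = 0 := fun θ => (hsum0 θ).tsum_eq
    simp [h4]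
  have hright : ∀ j : ℤ, (∫ θ in Set.Ioc (0:ℝ) (2*π), F j θ ∂volume)
      = u j * (if j = k then ((2*π:ℝ):ℂ) else 0) := by
    intro j
    have h2 : (∫ θ in Set.Ioc (0:ℝ) (2*π), F j θ ∂volume) = ∫ θ in (0:ℝ)..(2*π), F j θ := by
      rw [intervalIntegral.integral_of_le (by positivity)]
    rw [h2, hFdef]
    simp only
    rw [intervalIntegral.integral_const_mul]
    have h3 : (fun θ : ℝ => Complex.exp (((j:ℂ) - k) * θ * I))
        = fun θ : ℝ => Complex.exp ((((j - k : ℤ)):ℂ) * θ * I) := by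
      push_cast; rfl
    rw [h3, exp_circle_integral (j - k)]
    congr 1
    simp [sub_eq_zero]
  have hkey : (∑' j : ℤ, u j * (if j = k then ((2*π:ℝ):ℂ) else 0)) = 0 := by
    rw [← funext hright, ← hint, hleft]
  have hfun : (fun j : ℤ => u j * (if j = k then ((2*π:ℝ):ℂ) else 0))
      = fun j : ℤ => if j = k then u k * ((2*π:ℝ):ℂ) else 0 := by
    funext j
    by_cases h : j = k <;> simp [h]
  rw [hfun, tsum_ite_eq] at hkey
  have hpi : ((2*π:ℝ):ℂ) ≠ 0 := by
    simp [Real.pi_ne_zero]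
  exact (mul_eq_zero.1 hkey).resolve_right hpi

lemma one_le_limR {ν : ℤ → ℝ} {R : ℝ} (hν1 : ∀ n : ℤ, 1 ≤ ν n)
    (hR : Tendsto (fun n : ℕ => (ν (n : ℤ)) ^ ((n : ℝ)⁻¹)) atTop (nhds R)) : 1 ≤ R := by
  refine ge_of_tendsto hR (Eventually.of_forall fun n => ?_)
  calc (1:ℝ) = 1 ^ ((n:ℝ)⁻¹) := (Real.one_rpow _).symm
    _ ≤ ν (n:ℤ) ^ ((n:ℝ)⁻¹) := Real.rpow_le_rpow zero_le_one (hν1 _) (by positivity)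

lemma weighted_geo_summable {ν : ℤ → ℝ} {R : ℝ} (hν1 : ∀ n : ℤ, 1 ≤ ν n)
    (hR : Tendsto (fun n : ℕ => (ν (n : ℤ)) ^ ((n : ℝ)⁻¹)) atTop (nhds R))
    {s : ℝ} (hs0 : 0 ≤ s) (hsR : s < R⁻¹) :
    Summable fun n : ℕ => ν ((n : ℤ) + 1) * s ^ n := by
  have hR1 : 1 ≤ R := one_le_limR hν1 hR
  have hRpos : 0 < R := lt_of_lt_of_le one_pos hR1
  obtain ⟨t, hst, htR⟩ := exists_between hsR
  have ht : 0 < t := lt_of_le_of_lt hs0 hst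
  have hRt : R * t < 1 := by
    calc R * t < R * R⁻¹ := by exact mul_lt_mul_of_pos_left htR hRpos
      _ = 1 := mul_inv_cancel₀ (ne_of_gt hRpos)
  have hRt' : R < t⁻¹ := by
    rw [← one_div]
    exact (lt_div_iff₀ ht).2 hRt
  obtain ⟨R', hRR', hR't⟩ := exists_between hRt'
  have hR'pos : 0 < R' := lt_trans hRpos hRR'
  have hR'tlt : R' * t < 1 := by
    calc R' * t < t⁻¹ * t := mul_lt_mul_of_pos_right hR't ht
      _ = 1 := inv_mul_cancel₀ (ne_of_gt ht)
  have hev : ∀ᶠ n : ℕ in atTop, (ν (n:ℤ)) ^ ((n:ℝ)⁻¹) < R' :=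
    hR.eventually_lt_const hRR'
  have hbound : ∀ᶠ n : ℕ in atTop, ν ((n:ℤ)) ≤ R' ^ n := by
    filter_upwards [hev, eventually_ge_atTop 1] with n hn hn1
    have hνpos : (0:ℝ) ≤ ν (n:ℤ) := le_trans zero_le_one (hν1 _)
    have hn0 : (n:ℝ) ≠ 0 := by positivity
    have h1 : ((ν (n:ℤ)) ^ ((n:ℝ)⁻¹)) ^ (n:ℝ) ≤ R' ^ (n:ℝ) :=
      Real.rpow_le_rpow (Real.rpow_nonneg hνpos _) (le_of_lt hn) (by positivity)
    rw [← Real.rpow_mul hνpos, inv_mul_cancel₀ hn0, Real.rpow_one] at h1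
    rw [← Real.rpow_natCast R' n]
    exact h1
  have hO : (fun n : ℕ => ν ((n:ℤ) + 1) * s ^ n) =O[atTop] (fun n : ℕ => (R' * t) ^ n) := by
    refine Asymptotics.IsBigO.of_bound R' ?_
    have hb2 : ∀ᶠ n : ℕ in atTop, ν (((n+1):ℕ):ℤ) ≤ R' ^ (n+1) := by
      have := (tendsto_add_atTop_nat 1).eventually hbound
      exact this
    filter_upwards [hb2] with n hn
    have hνpos : (0:ℝ) ≤ ν ((n:ℤ)+1) := le_trans zero_le_one (hν1 _)
    have hcast : (((n+1):ℕ):ℤ) = (n:ℤ) + 1 := by push_cast; ring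
    rw [hcast] at hn
    have hterm : ν ((n:ℤ)+1) * s ^ n ≤ R' * (R' * t) ^ n := by
      calc ν ((n:ℤ)+1) * s ^ n ≤ R' ^ (n+1) * t ^ n := by
            refine mul_le_mul hn (pow_le_pow_left₀ hs0 (le_of_lt hst) n) (by positivity)
              (by positivity)
        _ = R' * (R' * t) ^ n := by rw [mul_pow, pow_succ]; ring
    rw [Real.norm_of_nonneg (by positivity), Real.norm_of_nonneg (by positivity)]
    exact hterm
  exact summable_of_isBigO_nat (summable_geometric_of_lt_one (by positivity) hR'tlt) hO

end Aux

/-- Corollary: multiplying `g ∈ A_1` by a rational function `r` without poles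
in the annulus `1/R ≤ |z| ≤ 1` preserves the property that the negative part
of the coefficient sequence lies in `A_ν^-`. -/
theorem rational_mul_preserves_negative_part (ν : ℤ → ℝ) (R : ℝ)
    (hν0 : ν 0 = 1)
    (hν1 : ∀ n : ℤ, 1 ≤ ν n)
    (hνsym : ∀ n : ℤ, ν (-n) = ν n)
    (hνsub : ∀ n m : ℤ, ν (n + m) ≤ ν n * ν m)
    (hνmono : ∀ n m : ℤ, 0 ≤ n → n ≤ m → ν n ≤ ν m)
    (hR : Tendsto (fun n : ℕ => (ν (n : ℤ)) ^ ((n : ℝ)⁻¹)) atTop (nhds R))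
    (g r : ℂ → ℂ) (d dhat : ℤ → ℂ)
    -- `g(z) = Σ_k d_k z^k ∈ A_1`:
    (hd : Summable fun k : ℤ => ‖d k‖)
    (hgd : ∀ z : ℂ, ‖z‖ = 1 → HasSum (fun k : ℤ => d k * z ^ k) (g z))
    -- `r` is a rational function with no poles in `1/R ≤ |z| ≤ 1`:
    (hr : ∃ p q : Polynomial ℂ, ∀ z : ℂ, R⁻¹ ≤ ‖z‖ → ‖z‖ ≤ 1 →
      q.eval z ≠ 0 ∧ r z = p.eval z / q.eval z)
    -- `r(z) g(z) = Σ_k d̂_k z^k`: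
    (hdhat : ∀ z : ℂ, ‖z‖ = 1 → HasSum (fun k : ℤ => dhat k * z ^ k) (r z * g z))
    -- `Σ_{k<0} d_k z^k ∈ A_ν^-`:
    (hdν : Summable fun k : ℕ => ν ((k : ℤ) + 1) * ‖d (-(k : ℤ) - 1)‖) :
    -- then `Σ_{k<0} d̂_k z^k ∈ A_ν^-`:
    Summable fun k : ℕ => ν ((k : ℤ) + 1) * ‖dhat (-(k : ℤ) - 1)‖ := by
  obtain ⟨p, q, hpq⟩ := hr
  have hR1 : 1 ≤ R := one_le_limR hν1 hR
  have hRpos : 0 < R := lt_of_lt_of_le one_pos hR1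
  have hRinv : R⁻¹ ≤ 1 := by
    rw [inv_le_one_iff₀]; right; exact hR1
  -- the weight
  set w : ℤ → ℝ := fun j => if 0 ≤ j then 1 else ν (-j) with hwdef
  have hwval : ∀ j : ℤ, w j = if 0 ≤ j then 1 else ν (-j) := fun j => by rw [hwdef]
  have hwnat : ∀ n : ℕ, w ((n:ℕ) : ℤ) = 1 := fun n => by
    rw [hwval]; exact if_pos (Int.natCast_nonneg n)
  have hwneg : ∀ j : ℤ, ¬ 0 ≤ j → w j = ν (-j) := fun j h => by
    rw [hwval]; exact if_neg h
  have hw1 : ∀ j, 1 ≤ w j := fun j => by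
    by_cases h : 0 ≤ j
    · rw [hwval, if_pos h]
    · rw [hwneg j h]; exact hν1 _
  have hw0 : ∀ j, 0 ≤ w j := fun j => le_trans zero_le_one (hw1 j)
  have hwsub : ∀ i j, w (i + j) ≤ w i * w j := by
    intro i j
    by_cases hij : 0 ≤ i + j
    · rw [hwval (i+j), if_pos hij]
      calc (1:ℝ) ≤ w i := hw1 i
        _ ≤ w i * w j := le_mul_of_one_le_right (hw0 i) (hw1 j)
    · rw [hwneg _ hij]
      by_cases hi : 0 ≤ i
      · have hj : ¬ 0 ≤ j := by omega
        rw [hwval i, if_pos hi, hwneg j hj, one_mul]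
        exact hνmono _ _ (by omega) (by omega)
      · by_cases hj : 0 ≤ j
        · rw [hwval j, if_pos hj, hwneg i hi, mul_one]
          exact hνmono _ _ (by omega) (by omega)
        · rw [hwneg i hi, hwneg j hj]
          have h1 : (-(i+j) : ℤ) = (-i) + (-j) := by ring
          rw [h1]
          exact hνsub _ _
  -- d has w-summable coefficients
  have hdG : Summable fun j : ℤ => w j * ‖d j‖ := by
    refine Summable.of_nat_of_neg_add_one (f := fun j => w j * ‖d j‖) ?_ ?_
    · have h1 : Summable fun n : ℕ => ‖d ((n:ℕ) : ℤ)‖ :=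
        hd.comp_injective (fun a b h => by exact_mod_cast h)
      refine h1.congr (fun n => ?_)
      show ‖d ((n:ℕ) : ℤ)‖ = w ((n:ℕ) : ℤ) * ‖d ((n:ℕ) : ℤ)‖
      rw [hwnat n, one_mul]
    · refine hdν.congr (fun n => ?_)
      have h1 : ¬ (0:ℤ) ≤ -((n:ℤ) + 1) := by omega
      have h2 : (-(-((n:ℤ) + 1)) : ℤ) = (n:ℤ) + 1 := by ring
      have h3 : (-((n:ℤ) + 1) : ℤ) = -(n:ℤ) - 1 := by ring
      show ν ((n:ℤ) + 1) * ‖d (-(n:ℤ) - 1)‖ = w (-((n:ℤ) + 1)) * ‖d (-((n:ℤ) + 1))‖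
      rw [hwneg _ h1, h2, h3]
  -- r = p/q has a good representation
  have hq1 : q.eval 1 ≠ 0 := (hpq 1 (by simp [hRinv]) (by simp)).1
  have hq0 : q ≠ 0 := fun h => hq1 (by simp [h])
  have hsplit : q = Polynomial.C q.leadingCoeff
      * (q.roots.map fun a => Polynomial.X - Polynomial.C a).prod :=
    (IsAlgClosed.splits q).eq_prod_roots
  have hroots : ∀ a ∈ q.roots, GoodRep w (fun z => (z - a)⁻¹) := by
    intro a ha
    have haroot : q.eval a = 0 := (Polynomial.isRoot_of_mem_roots ha)
    have hcase : ‖a‖ < R⁻¹ ∨ 1 < ‖a‖ := by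
      by_contra hcon
      push_neg at hcon
      exact (hpq a hcon.1 hcon.2).1 haroot
    rcases hcase with hin | hout
    · have ha1 : ‖a‖ < 1 := lt_of_lt_of_le hin hRinv
      refine goodRep_inv_in ha1 ?_
      have hbase := weighted_geo_summable hν1 hR (norm_nonneg a) hin
      refine hbase.congr (fun n => ?_)
      have h1 : ¬ (0:ℤ) ≤ -(n:ℤ) - 1 := by omega
      have h2 : (-(-(n:ℤ) - 1) : ℤ) = (n:ℤ) + 1 := by ring
      rw [hwneg _ h1, h2]
    · exact goodRep_inv_out hw1 hwnat hout
  have hqinv : GoodRep w (fun z => (q.eval z)⁻¹) := by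
    have hprod := goodRep_inv_multiset hw1 hwsub q.roots hroots
    have hconst := goodRep_const (W := w) hw1 ((q.leadingCoeff)⁻¹)
    refine (GoodRep.mul hw1 hwsub hconst hprod).congr (fun z _ => ?_)
    have heval : q.eval z = q.leadingCoeff * ((q.roots.map fun a => z - a)).prod := by
      conv_lhs => rw [hsplit]
      rw [Polynomial.eval_mul, Polynomial.eval_C, Polynomial.eval_multiset_prod]
      congr 1
      rw [Multiset.map_map]
      congr 1
      exact Multiset.map_congr rfl (fun x _ => by
        simp [Function.comp, Polynomial.eval_sub])
    rw [heval, mul_inv]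
  have hrrep : GoodRep w (fun z => p.eval z * (q.eval z)⁻¹) :=
    GoodRep.mul hw1 hwsub (goodRep_poly hw1 p) hqinv
  obtain ⟨ρ, hρ, hρs⟩ := hrrep
  -- the convolution
  set dh := myconv ρ d with hdhdef
  have hdhG : Summable fun k => w k * ‖dh k‖ := conv_summable hw1 hwsub hρ hdG
  have hdhHas : ∀ z : ℂ, ‖z‖ = 1 → HasSum (fun k : ℤ => dh k * z ^ k) (r z * g z) := by
    intro z hz
    have hz' : R⁻¹ ≤ ‖z‖ := le_of_le_of_eq hRinv hz.symm
    have hz'' : ‖z‖ ≤ 1 := le_of_eq hz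
    have hrz : r z = p.eval z * (q.eval z)⁻¹ := by
      rw [(hpq z hz' hz'').2, div_eq_mul_inv]
    have h1 : HasSum (fun j => ρ j * z ^ j) (r z) := by
      rw [hrz]; exact hρs z hz
    exact conv_hasSum hw1 hρ hdG hz h1 (hgd z hz)
  -- uniqueness of coefficients: dhat = dh
  have hdhat_l1 : Summable fun j : ℤ => ‖dhat j‖ := by
    have h1 := (hdhat 1 (by simp)).summable
    have h2 : Summable dhat := by
      refine h1.congr (fun j => ?_)
      simp
    exact (summable_norm_iff.2 h2)
  have hdh_l1 : Summable fun j : ℤ => ‖dh j‖ :=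
    hdhG.of_nonneg_of_le (fun j => norm_nonneg _)
      (fun j => le_mul_of_one_le_left (norm_nonneg _) (hw1 j))
  have hu : Summable fun j : ℤ => ‖dhat j - dh j‖ :=
    (hdhat_l1.add hdh_l1).of_nonneg_of_le (fun j => norm_nonneg _)
      (fun j => norm_sub_le _ _)
  have h0 : ∀ z : ℂ, ‖z‖ = 1 → HasSum (fun j : ℤ => (dhat j - dh j) * z ^ j) 0 := by
    intro z hz
    have h1 := (hdhat z hz).sub (hdhHas z hz)
    rw [sub_self] at h1
    exact h1.congr_fun (fun j => by ring)
  have hequal : ∀ k : ℤ, dhat k = dh k := by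
    intro k
    have := coeff_unique hu h0 k
    linear_combination this
  -- conclusion
  have hfinal : Summable fun k : ℕ => w (-(k:ℤ) - 1) * ‖dh (-(k:ℤ) - 1)‖ :=
    hdhG.comp_injective (i := fun k : ℕ => -(k:ℤ) - 1) (fun a b h => by dsimp only at h; omega)
  refine hfinal.congr (fun k => ?_)
  have h1 : ¬ (0:ℤ) ≤ -(k:ℤ) - 1 := by omega
  have h2 : (-(-(k:ℤ) - 1) : ℤ) = (k:ℤ) + 1 := by ring
  rw [hwneg _ h1, h2, hequal]
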